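/- Let f : ℝⁿ × ℝᵐ → ℝⁿ and φ : ℝⁿ × ℝᵐ → ℝᵐ be continuously differentiable, and let u : ℝⁿ → ℝᵐ be continuously differentiable with φ(q, u(q)) = 0 for all q ∈ ℝⁿ and D_uφ(q, u(q)) invertible for all q ∈ ℝⁿ. Define λ : ℝⁿ × ℝⁿ → ℝᵐ by λ(q,p) = −( D_uφ(q,u(q))ᵀ )⁻¹ D_uf(q,u(q))ᵀ p. Suppose (q,p) : [t₀,t₁] → ℝⁿ × ℝⁿ is a continuously differentiable solution of the reduced Hamiltonian system q̇ = f(q, u(q)), ṗ = −D_qf(q,u(q))ᵀ p − Du(q)ᵀ D_uf(q,u(q))ᵀ p. Then the curve t ↦ (q(t), u(q(t)), p(t), λ(q(t),p(t))) satisfies all four equations of the adjoint DAE system: q̇ = f(q,u), ṗ = −D_qf(q,u)ᵀ p − D_qφ(q,u)ᵀ λ, 0 = φ(q,u), and 0 = D_uf(q,u)ᵀ p + D_uφ(q,u)ᵀ λ. -/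

import Mathlib

open scoped RealInnerProductSpace

noncomputable section

abbrev Euc (n : ℕ) : Type := EuclideanSpace ℝ (Fin n)

/-- Partial Jacobian `D_qF(q,u)` with respect to the first argument. -/
noncomputable def Dq {n m k : ℕ} (F : Euc n × Euc m → Euc k) (q : Euc n) (u : Euc m) :
    Euc n →L[ℝ] Euc k :=
  fderiv ℝ (fun q' => F (q', u)) q

/-- Partial Jacobian `D_uF(q,u)` with respect to the second argument. -/
noncomputable def Du {n m k : ℕ} (F : Euc n × Euc m → Euc k) (q : Euc n) (u : Euc m) :
    Euc m →L[ℝ] Euc k :=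
  fderiv ℝ (fun u' => F (q, u')) u

/-- `D_qF(q,u)ᵀ`, the transpose (adjoint) of the partial Jacobian in `q`. -/
noncomputable def DqT {n m k : ℕ} (F : Euc n × Euc m → Euc k) (q : Euc n) (u : Euc m) :
    Euc k →L[ℝ] Euc n :=
  ContinuousLinearMap.adjoint (Dq F q u)

/-- `D_uF(q,u)ᵀ`, the transpose (adjoint) of the partial Jacobian in `u`. -/
noncomputable def DuT {n m k : ℕ} (F : Euc n × Euc m → Euc k) (q : Euc n) (u : Euc m) :
    Euc k →L[ℝ] Euc m :=
  ContinuousLinearMap.adjoint (Du F q u)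

/-- Partial gradient `∇_qL(q,u)`. -/
noncomputable def gradQ {n m : ℕ} (L : Euc n × Euc m → ℝ) (q : Euc n) (u : Euc m) : Euc n :=
  gradient (fun q' => L (q', u)) q

/-- Partial gradient `∇_uL(q,u)`. -/
noncomputable def gradU {n m : ℕ} (L : Euc n × Euc m → ℝ) (q : Euc n) (u : Euc m) : Euc m :=
  gradient (fun u' => L (q, u')) u

section Aux

variable {n m k : ℕ}

open ContinuousLinearMap

lemma DqAux (F : Euc n × Euc m → Euc k) (hF : ContDiff ℝ 1 F) (x : Euc n) (u : Euc m) :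
    HasFDerivAt (fun q' => F (q', u))
      ((fderiv ℝ F (x, u)).comp ((ContinuousLinearMap.id ℝ (Euc n)).prod 0)) x :=
  ((hF.differentiable one_ne_zero (x, u)).hasFDerivAt).comp x
    (HasFDerivAt.prodMk (hasFDerivAt_id x) (hasFDerivAt_const u x))

lemma DuAux (F : Euc n × Euc m → Euc k) (hF : ContDiff ℝ 1 F) (x : Euc n) (u : Euc m) :
    HasFDerivAt (fun u' => F (x, u'))
      ((fderiv ℝ F (x, u)).comp ((0 : Euc m →L[ℝ] Euc n).prod (ContinuousLinearMap.id ℝ (Euc m)))) u :=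
  ((hF.differentiable one_ne_zero (x, u)).hasFDerivAt).comp u
    (HasFDerivAt.prodMk (hasFDerivAt_const x u) (hasFDerivAt_id u))

/-- Chain rule on the constraint: `D_qφ = −D_uφ ∘ Du(q)`. -/
lemma constraint_chain (φ : Euc n × Euc m → Euc m) (hφ : ContDiff ℝ 1 φ)
    (ufun : Euc n → Euc m) (hufun : ContDiff ℝ 1 ufun)
    (hconstr : ∀ x : Euc n, φ (x, ufun x) = 0) (x : Euc n) :
    Dq φ x (ufun x) = -((Du φ x (ufun x)).comp (fderiv ℝ ufun x)) := by
  set u := ufun x with hu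
  have hφd : HasFDerivAt φ (fderiv ℝ φ (x, u)) (x, u) :=
    (hφ.differentiable one_ne_zero (x, u)).hasFDerivAt
  have hcz : HasFDerivAt (fun x' => φ (x', ufun x'))
      ((fderiv ℝ φ (x, u)).comp
        ((ContinuousLinearMap.id ℝ (Euc n)).prod (fderiv ℝ ufun x))) x :=
    hφd.comp x (HasFDerivAt.prodMk (hasFDerivAt_id x) (hufun.differentiable one_ne_zero x).hasFDerivAt)
  have hcz0 : HasFDerivAt (fun x' => φ (x', ufun x')) (0 : Euc n →L[ℝ] Euc m) x := by
    simp only [hconstr]; exact hasFDerivAt_const 0 x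
  have hzero := hcz.unique hcz0
  have hDq : Dq φ x u = (fderiv ℝ φ (x, u)).comp ((ContinuousLinearMap.id ℝ (Euc n)).prod 0) :=
    (DqAux φ hφ x u).fderiv
  have hDu : Du φ x u = (fderiv ℝ φ (x, u)).comp
      ((0 : Euc m →L[ℝ] Euc n).prod (ContinuousLinearMap.id ℝ (Euc m))) :=
    (DuAux φ hφ x u).fderiv
  refine ContinuousLinearMap.ext fun v => ?_
  have h0 : fderiv ℝ φ (x, u) (v, fderiv ℝ ufun x v) = 0 := by
    have := congrArg (fun (T : Euc n →L[ℝ] Euc m) => T v) hzero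
    simpa using this
  have hsplit : (v, fderiv ℝ ufun x v) =
      ((v, 0) : Euc n × Euc m) + ((0, fderiv ℝ ufun x v) : Euc n × Euc m) := by
    simp
  rw [hsplit, map_add] at h0
  simp only [hDq, hDu, ContinuousLinearMap.comp_apply, ContinuousLinearMap.prod_apply,
    ContinuousLinearMap.id_apply, ContinuousLinearMap.zero_apply, ContinuousLinearMap.neg_apply]
  exact eq_neg_of_add_eq_zero_left h0

end Aux

/-- given a reduction `u = u(q)` of the index-1 constraint and the induced
multiplier `λ(q,p) = −(D_uφ(q,u(q))ᵀ)⁻¹ D_uf(q,u(q))ᵀ p`, every solution of the reduced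
Hamiltonian system lifts to a solution of the full adjoint DAE system. -/
theorem reduction_solves_adjoint_DAE {n m : ℕ}
    (f : Euc n × Euc m → Euc n) (φ : Euc n × Euc m → Euc m)
    (hf : ContDiff ℝ 1 f) (hφ : ContDiff ℝ 1 φ)
    (ufun : Euc n → Euc m) (hufun : ContDiff ℝ 1 ufun)
    (hconstr : ∀ x : Euc n, φ (x, ufun x) = 0)
    (hinv : ∀ x : Euc n, Function.Bijective (Du φ x (ufun x)))
    (lamfun : Euc n → Euc n → Euc m)
    (hlamfun : ∀ (x : Euc n) (y : Euc n),
      lamfun x y = -(ContinuousLinearMap.inverse (DuT φ x (ufun x)) (DuT f x (ufun x) y)))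
    (t₀ t₁ : ℝ) (q p : ℝ → Euc n)
    (hq : ContDiff ℝ 1 q) (hp : ContDiff ℝ 1 p)
    (hqode : ∀ t ∈ Set.Icc t₀ t₁, HasDerivAt q (f (q t, ufun (q t))) t)
    (hpode : ∀ t ∈ Set.Icc t₀ t₁,
      HasDerivAt p (-(DqT f (q t) (ufun (q t)) (p t))
        - ContinuousLinearMap.adjoint (fderiv ℝ ufun (q t))
            (DuT f (q t) (ufun (q t)) (p t))) t) :
    ∀ t ∈ Set.Icc t₀ t₁,
      HasDerivAt q (f (q t, ufun (q t))) t ∧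
      HasDerivAt p (-(DqT f (q t) (ufun (q t)) (p t))
        - DqT φ (q t) (ufun (q t)) (lamfun (q t) (p t))) t ∧
      φ (q t, ufun (q t)) = 0 ∧
      DuT f (q t) (ufun (q t)) (p t)
        + DuT φ (q t) (ufun (q t)) (lamfun (q t) (p t)) = 0 := by
  classical
  -- pointwise facts at an arbitrary x
  have main : ∀ x : Euc n,
      (∀ y : Euc n, DuT φ x (ufun x) (lamfun x y) = -(DuT f x (ufun x) y)) := by
    intro x
    set u := ufun x with hu
    -- continuous linear equivalence from bijectivity
    let eL : Euc m ≃ₗ[ℝ] Euc m :=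
      LinearEquiv.ofBijective ((Du φ x u) : Euc m →ₗ[ℝ] Euc m) (hinv x)
    let e : Euc m ≃L[ℝ] Euc m := eL.toContinuousLinearEquiv
    have hecoe : (e : Euc m →L[ℝ] Euc m) = Du φ x u := by
      ext v; rfl
    have hadj1 : (ContinuousLinearMap.adjoint ((e.symm : Euc m ≃L[ℝ] Euc m) : Euc m →L[ℝ] Euc m)).comp
        (ContinuousLinearMap.adjoint (e : Euc m →L[ℝ] Euc m)) = ContinuousLinearMap.id ℝ (Euc m) := by
      rw [← ContinuousLinearMap.adjoint_comp]
      have : ((e : Euc m →L[ℝ] Euc m)).comp (e.symm : Euc m →L[ℝ] Euc m)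
          = ContinuousLinearMap.id ℝ (Euc m) := by ext v; simp
      rw [this, ContinuousLinearMap.adjoint_id]
    have hadj2 : (ContinuousLinearMap.adjoint (e : Euc m →L[ℝ] Euc m)).comp
        (ContinuousLinearMap.adjoint ((e.symm : Euc m ≃L[ℝ] Euc m) : Euc m →L[ℝ] Euc m))
        = ContinuousLinearMap.id ℝ (Euc m) := by
      rw [← ContinuousLinearMap.adjoint_comp]
      have : ((e.symm : Euc m →L[ℝ] Euc m)).comp (e : Euc m →L[ℝ] Euc m)
          = ContinuousLinearMap.id ℝ (Euc m) := by ext v; simp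
      rw [this, ContinuousLinearMap.adjoint_id]
    let eT : Euc m ≃L[ℝ] Euc m :=
      ContinuousLinearEquiv.equivOfInverse
        (ContinuousLinearMap.adjoint (e : Euc m →L[ℝ] Euc m))
        (ContinuousLinearMap.adjoint ((e.symm : Euc m ≃L[ℝ] Euc m) : Euc m →L[ℝ] Euc m))
        (fun v => by
          have := congrArg (fun (T : Euc m →L[ℝ] Euc m) => T v) hadj1; simpa using this)
        (fun v => by
          have := congrArg (fun (T : Euc m →L[ℝ] Euc m) => T v) hadj2; simpa using this)
    have heT : (eT : Euc m →L[ℝ] Euc m) = DuT φ x u := by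
      rw [DuT, ← hecoe]; rfl
    intro y
    rw [hlamfun, map_neg, ← heT, ContinuousLinearMap.inverse_equiv]
    simp
    rfl
  have keyQ : ∀ x : Euc n,
      DqT φ x (ufun x) = -((ContinuousLinearMap.adjoint (fderiv ℝ ufun x)).comp
        (DuT φ x (ufun x))) := by
    intro x
    rw [DqT, constraint_chain φ hφ ufun hufun hconstr x, map_neg,
      ContinuousLinearMap.adjoint_comp]
    rfl
  intro t ht
  refine ⟨hqode t ht, ?_, hconstr (q t), ?_⟩
  · have h := hpode t ht
    have : -(DqT f (q t) (ufun (q t)) (p t))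
        - DqT φ (q t) (ufun (q t)) (lamfun (q t) (p t))
        = -(DqT f (q t) (ufun (q t)) (p t))
        - ContinuousLinearMap.adjoint (fderiv ℝ ufun (q t))
            (DuT f (q t) (ufun (q t)) (p t)) := by
      rw [keyQ (q t)]
      simp [main (q t) (p t)]
    rw [this]; exact h
  · rw [main (q t) (p t)]; simp



end
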